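/- Strong duality for the longest-path dual: let V be a finite type with distinguished vertices p and q, A a finite type of arcs with source and target maps u, w : A → V, and F : A → ℝ arc lengths. Assume the multigraph is acyclic (there is no nonempty list of arcs a₁, …, aₘ with w aₖ = u aₖ₊₁ for 1 ≤ k < m and w aₘ = u a₁), that every vertex admits an arc path to q (the empty path being allowed for q itself), and that there exists at least one p–q path. Then there exists y : V → ℝ with y q = 0 and y (u a) ≥ F a + y (w a) for every a ∈ A, such that y p equals the maximum of Σ_{k} F aₖ over all p–q paths. -/

import Mathlib

/-- A `p`–`q` path in a directed multigraph with arcs `A`, source map `u` and target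
map `w`: a nonempty list of arcs with matching consecutive endpoints, starting at `p`
and ending at `q`. -/
def IsArcPath {V A : Type*} (u w : A → V) (p q : V) (l : List A) : Prop :=
  ∃ h : l ≠ [], l.Chain' (fun a b => w a = u b) ∧
    u (l.head h) = p ∧ w (l.getLast h) = q

/-- In an acyclic multigraph, any chain of arcs has no duplicates. -/
lemma chain_nodup_of_acyclic {V A : Type*} (u w : A → V)
    (hacyc : ¬ ∃ l : List A, ∃ h : l ≠ [],
      l.Chain' (fun a b => w a = u b) ∧ w (l.getLast h) = u (l.head h))
    (l : List A) (hc : l.Chain' (fun a b => w a = u b)) : l.Nodup := by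
  by_contra hnd
  rw [List.nodup_iff_injective_get] at hnd
  simp only [Function.Injective, not_forall] at hnd
  obtain ⟨i, j, hij, hne⟩ := hnd
  -- wlog i < j
  have key : ∀ (i j : ℕ) (hi : i < l.length) (hj : j < l.length), i < j →
      l[i] = l[j] → False := by
    intro i j hi hj hlt heq
    set l' := (l.drop i).take (j - i) with hl'
    have hlen : l'.length = j - i := by
      simp [hl', List.length_take, List.length_drop]; omega
    have hne' : l' ≠ [] := by
      intro h; rw [h] at hlen; simp at hlen; omega
    have hinfix : l' <:+: l :=
      ((List.take_prefix _ _).isInfix).trans (List.drop_suffix i l).isInfix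
    have hc' : l'.Chain' (fun a b => w a = u b) := hc.infix hinfix
    have hget : ∀ (k : ℕ) (hk : k < l'.length), l'[k] = l[i + k]'(by omega) := by
      intro k hk
      simp [hl', List.getElem_take, List.getElem_drop]
    have hhead : l'.head hne' = l[i] := by
      rw [List.head_eq_getElem_zero hne', hget 0 (by omega)]; simp
    have hlast : l'.getLast hne' = l[j - 1] := by
      rw [List.getLast_eq_getElem, hget _ (by omega)]
      congr 1; omega
    have hrel : w (l[j-1]'(by omega)) = u (l[j]'hj) := by
      have := List.isChain_iff_getElem.mp hc (j - 1) (by omega)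
      simpa [show j - 1 + 1 = j by omega] using this
    exact hacyc ⟨l', hne', hc', by rw [hlast, hhead, hrel, heq]⟩
  have hv : (i : ℕ) ≠ (j : ℕ) := fun h => hne (Fin.ext h)
  rcases hv.lt_or_gt with h | h
  · exact key i j i.2 j.2 h (by simpa using hij)
  · exact key j i j.2 i.2 h (by simpa using hij.symm)

theorem longest_path_strong_duality {V A : Type*} [Fintype V] [Fintype A]
    (p q : V) (u w : A → V) (F : A → ℝ)
    (hacyc : ¬ ∃ l : List A, ∃ h : l ≠ [],
      l.Chain' (fun a b => w a = u b) ∧ w (l.getLast h) = u (l.head h))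
    (hreach : ∀ x : V, x = q ∨ ∃ l : List A, IsArcPath u w x q l)
    (hpq : ∃ l : List A, IsArcPath u w p q l) :
    ∃ y : V → ℝ, y q = 0 ∧ (∀ a : A, y (u a) ≥ F a + y (w a)) ∧
      IsGreatest {r : ℝ | ∃ l : List A, IsArcPath u w p q l ∧ r = (l.map F).sum}
        (y p) := by
  classical
  -- value set at each vertex
  set S : V → Set ℝ := fun x =>
    {r : ℝ | (x = q ∧ r = 0) ∨ ∃ l : List A, IsArcPath u w x q l ∧ r = (l.map F).sum}
    with hS
  have hfin : ∀ x, (S x).Finite := by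
    intro x
    have h1 : {l : List A | l.Nodup}.Finite :=
      List.finite_length_le A (Fintype.card A) |>.subset
        (fun l hl => hl.length_le_card)
    refine (Set.Finite.insert 0 (h1.image (fun l => (l.map F).sum))).subset ?_
    rintro r (⟨-, rfl⟩ | ⟨l, ⟨hne, hc, -⟩, rfl⟩)
    · exact Set.mem_insert _ _
    · exact Set.mem_insert_of_mem _ ⟨l, chain_nodup_of_acyclic u w hacyc l hc, rfl⟩
  have hne : ∀ x, (S x).Nonempty := by
    intro x
    rcases hreach x with rfl | ⟨l, hl⟩
    · exact ⟨0, Or.inl ⟨rfl, rfl⟩⟩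
    · exact ⟨(l.map F).sum, Or.inr ⟨l, hl, rfl⟩⟩
  set y : V → ℝ := fun x => sSup (S x) with hy
  have hmem : ∀ x, y x ∈ S x := fun x => (hne x).csSup_mem (hfin x)
  have hle : ∀ x r, r ∈ S x → r ≤ y x := fun x r hr => le_csSup (hfin x).bddAbove hr
  -- no q-q paths
  have hqq : ∀ l : List A, ¬ IsArcPath u w q q l := by
    rintro l ⟨hn, hc, hh, hl⟩
    exact hacyc ⟨l, hn, hc, by rw [hl, hh]⟩
  have hyq : y q = 0 := by
    rcases hmem q with ⟨-, h⟩ | ⟨l, hl, -⟩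
    · exact h
    · exact absurd hl (hqq l)
  refine ⟨y, hyq, ?_, ?_, ?_⟩
  · -- dual feasibility
    intro a
    rcases hmem (w a) with ⟨hq, h0⟩ | ⟨l, ⟨hn, hc, hh, hlast⟩, hsum⟩
    · have : F a + y (w a) ∈ S (u a) := by
        refine Or.inr ⟨[a], ⟨by simp, List.isChain_singleton a, rfl, by simpa using hq⟩, by simp [h0]⟩
      exact hle _ _ this
    · have : F a + y (w a) ∈ S (u a) := by
        refine Or.inr ⟨a :: l, ⟨by simp, ?_, rfl, ?_⟩, by simp [hsum]⟩
        · unfold List.Chain'; rw [List.isChain_cons]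
          refine ⟨fun b hb => ?_, hc⟩
          rw [List.head?_eq_head hn] at hb
          rw [← Option.some_inj.mp hb, hh]
        · rwa [List.getLast_cons hn]
      exact hle _ _ this
  · -- y p is attained
    rcases hmem p with ⟨rfl, -⟩ | ⟨l, hl, hsum⟩
    · obtain ⟨l, hl⟩ := hpq
      exact absurd hl (hqq l)
    · exact ⟨l, hl, hsum⟩
  · -- y p is an upper bound
    rintro r ⟨l, hl, rfl⟩
    exact hle p _ (Or.inr ⟨l, hl, rfl⟩)
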